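/- arXiv:1905.12579 — 4 statements merged into one kernel-verified Lean document; each statement's English description precedes it below -/
import Mathlib

section
/- For every nonnegative integer n, as an identity of rational functions in two variables s and t: ((s+1)_n / n!)^3 * (3n+1)! / ((s+t+1)_{3n+2}) = sum over k from 1 to 3n+2 of A_k(t) / (s+t+k), where A_k(t) = (-1)^(k-1) * binomial(3n+1, k-1) * ((-t-k+1)_n / n!)^3. -/
open Finset Polynomial

lemma prod_Icc_one (N : ℕ) (f : ℕ → ℚ) :
    ∏ j ∈ Icc 1 N, f j = ∏ i ∈ range N, f (i + 1) := by
  refine Finset.prod_nbij' (fun j => j - 1) (fun i => i + 1) ?_ ?_ ?_ ?_ ?_ <;>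
    simp only [mem_Icc, mem_range] <;> intro a ha
  · omega
  · omega
  · omega
  · omega
  · congr 1; omega

lemma erase_Icc_eq (N k : ℕ) (hk : k ∈ Icc 1 N) :
    (Icc 1 N).erase k = Icc 1 (k-1) ∪ Icc (k+1) N := by
  simp only [mem_Icc] at hk
  ext j; simp only [mem_erase, mem_Icc, mem_union]; omega

lemma prod_lower (k : ℕ) : ∏ j ∈ Icc 1 (k-1), ((j:ℚ) - k) = (-1)^(k-1) * (k-1).factorial := by
  rcases Nat.eq_zero_or_pos k with h | h
  · subst h; simp
  obtain ⟨m, rfl⟩ : ∃ m, k = m + 1 := ⟨k - 1, by omega⟩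
  simp only [Nat.add_sub_cancel]
  rw [prod_Icc_one]
  push_cast
  calc ∏ i ∈ range m, ((i:ℚ) + 1 - (m+1)) = ∏ i ∈ range m, (-1) * ((m:ℚ) - i) := by
        refine prod_congr rfl fun i hi => by push_cast; ring
    _ = (-1)^m * ∏ i ∈ range m, ((m:ℚ) - i) := by rw [prod_mul_distrib, prod_const, card_range]
    _ = (-1)^m * (m.factorial : ℚ) := by
        congr 1
        rw [show ∏ i ∈ range m, ((m:ℚ) - i) = ∏ i ∈ range m, ((m - i : ℕ) : ℚ) from
          prod_congr rfl fun i hi => by rw [Nat.cast_sub (by simpa using (mem_range.1 hi).le)]]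
        rw [← Nat.cast_prod]
        congr 1
        rw [← Finset.prod_range_add_one_eq_factorial m, ← Finset.prod_range_reflect (fun i => i + 1) m]
        refine prod_congr rfl fun i hi => ?_
        simp only [mem_range] at hi; omega

lemma prod_upper (k N : ℕ) (hk : k ≤ N) :
    ∏ j ∈ Icc (k+1) N, ((j:ℚ) - k) = (N - k).factorial := by
  have : ∏ j ∈ Icc (k+1) N, ((j:ℚ) - k) = ∏ i ∈ Icc 1 (N - k), ((i : ℚ)) := by
    refine Finset.prod_nbij' (fun j => j - k) (fun i => i + k) ?_ ?_ ?_ ?_ ?_ <;>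
      simp only [mem_Icc] <;> intro a ha
    · omega
    · omega
    · omega
    · omega
    · have : ((a - k : ℕ) : ℚ) = (a : ℚ) - k := by
        rw [Nat.cast_sub (by omega)]
      rw [this]
  rw [this, prod_Icc_one, ← Nat.cast_prod]
  norm_cast
  exact Finset.prod_range_add_one_eq_factorial _

lemma prod_erase_eq (N k : ℕ) (hk : k ∈ Icc 1 N) :
    ∏ j ∈ (Icc 1 N).erase k, ((j:ℚ) - k)
      = (-1)^(k-1) * (k-1).factorial * (N - k).factorial := by
  simp only [mem_Icc] at hk
  rw [erase_Icc_eq N k (by simp [mem_Icc]; omega), prod_union (by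
    simp only [Finset.disjoint_left, mem_Icc]; omega),
    prod_lower, prod_upper k N hk.2, mul_assoc]

theorem stmt_1 (n : ℕ) (s t : ℚ)
    (h : ∀ k ∈ Finset.Icc 1 (3 * n + 2), s + t + (k : ℚ) ≠ 0) :
    ((∏ i ∈ Finset.range n, (s + 1 + (i : ℚ))) / (n.factorial : ℚ)) ^ 3 *
        ((3 * n + 1).factorial : ℚ) / (∏ i ∈ Finset.range (3 * n + 2), (s + t + 1 + (i : ℚ)))
      = ∑ k ∈ Finset.Icc 1 (3 * n + 2),
          ((-1 : ℚ) ^ (k - 1) * ((3 * n + 1).choose (k - 1) : ℚ) *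
            ((∏ i ∈ Finset.range n, (-t - (k : ℚ) + 1 + (i : ℚ))) / (n.factorial : ℚ)) ^ 3)
            / (s + t + (k : ℚ)) := by
  classical
  set N := 3 * n + 2 with hN
  set S := Finset.Icc 1 N with hS
  set v : ℕ → ℚ := fun k => -t - (k : ℚ) with hv
  have hinj : Set.InjOn v (S : Set ℕ) := by
    intro a _ b _ hab
    have : (a : ℚ) = b := by simp only [hv] at hab; linarith
    exact_mod_cast this
  set f : ℚ[X] := Polynomial.C (((3*n+1).factorial : ℚ)) *
      (∏ i ∈ range n, (Polynomial.X + Polynomial.C (1 + (i:ℚ))))^3 with hf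
  -- degree bound
  have hq : (∏ i ∈ range n, (Polynomial.X + Polynomial.C (1 + (i:ℚ)))).natDegree = n := by
    rw [Polynomial.natDegree_prod _ _ (fun i _ => Polynomial.X_add_C_ne_zero _)]
    trans ∑ _i ∈ range n, 1
    · exact Finset.sum_congr rfl fun i _ => Polynomial.natDegree_X_add_C _
    · simp
  have hcard : #S = N := by rw [hS, Nat.card_Icc]; omega
  have hdeg : f.degree < (#S : ℕ) := by
    have h1 : f.natDegree ≤ 3 * n := by
      rw [hf]
      refine (Polynomial.natDegree_mul_le).trans ?_
      rw [Polynomial.natDegree_C, Polynomial.natDegree_pow, hq]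
      omega
    calc f.degree ≤ (f.natDegree : WithBot ℕ) := Polynomial.degree_le_natDegree
      _ < ((#S : ℕ) : WithBot ℕ) := by
          rw [hcard]; exact_mod_cast (by omega : f.natDegree < N)
  have key0 := Lagrange.eq_interpolate hinj hdeg
  have key : f.eval s = ∑ k ∈ S, f.eval (v k) * (Lagrange.basis S v k).eval s := by
    conv_lhs => rw [key0]
    rw [Lagrange.interpolate_apply, Polynomial.eval_finset_sum]
    exact sum_congr rfl fun k _ => by rw [Polynomial.eval_mul, Polynomial.eval_C]
  -- evaluations of f
  have hfs : f.eval s = ((3*n+1).factorial : ℚ) * (∏ i ∈ range n, (s + 1 + (i:ℚ)))^3 := by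
    simp only [hf, Polynomial.eval_mul, Polynomial.eval_C, Polynomial.eval_pow,
      Polynomial.eval_prod, Polynomial.eval_add, Polynomial.eval_X]
    congr 2
    exact prod_congr rfl fun i _ => by ring
  have hfv : ∀ k : ℕ, f.eval (v k)
      = ((3*n+1).factorial : ℚ) * (∏ i ∈ range n, (-t - (k:ℚ) + 1 + (i:ℚ)))^3 := by
    intro k
    simp only [hf, Polynomial.eval_mul, Polynomial.eval_C, Polynomial.eval_pow,
      Polynomial.eval_prod, Polynomial.eval_add, Polynomial.eval_X, hv]
    congr 2
    exact prod_congr rfl fun i _ => by ring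
  -- denominator
  set D := ∏ j ∈ S, (s + t + (j:ℚ)) with hD
  have hDr : ∏ i ∈ range N, (s + t + 1 + (i:ℚ)) = D := by
    rw [hD, hS, prod_Icc_one]
    exact prod_congr rfl fun i _ => by push_cast; ring
  have hDne : D ≠ 0 := prod_ne_zero_iff.2 fun j hj => h j hj
  have hc : ((n.factorial : ℚ)) ≠ 0 := Nat.cast_ne_zero.2 n.factorial_ne_zero
  -- main computation
  have main : f.eval s / ((n.factorial : ℚ)^3 * D)
      = ∑ k ∈ S,
          ((-1 : ℚ) ^ (k - 1) * ((3 * n + 1).choose (k - 1) : ℚ) *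
            ((∏ i ∈ Finset.range n, (-t - (k : ℚ) + 1 + (i : ℚ))) / (n.factorial : ℚ)) ^ 3)
            / (s + t + (k : ℚ)) := by
    rw [key, sum_div]
    refine sum_congr rfl fun k hk => ?_
    have hkk : 1 ≤ k ∧ k ≤ N := by simpa [hS, mem_Icc] using hk
    have hstk : s + t + (k:ℚ) ≠ 0 := h k hk
    -- basis evaluation
    have hbasis : (Lagrange.basis S v k).eval s
        = (∏ j ∈ S.erase k, ((j:ℚ) - k))⁻¹ * ∏ j ∈ S.erase k, (s + t + (j:ℚ)) := by
      rw [Lagrange.basis, Polynomial.eval_prod, ← prod_inv_distrib, ← prod_mul_distrib]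
      refine prod_congr rfl fun j hj => ?_
      simp only [Lagrange.basisDivisor, Polynomial.eval_mul, Polynomial.eval_C,
        Polynomial.eval_sub, Polynomial.eval_X, hv]
      have h1 : -t - (k:ℚ) - (-t - (j:ℚ)) = (j:ℚ) - k := by ring
      have h2 : s - (-t - (j:ℚ)) = s + t + (j:ℚ) := by ring
      rw [h1, h2]
    set W := ∏ j ∈ S.erase k, ((j:ℚ) - k) with hWdef
    set E := ∏ j ∈ S.erase k, (s + t + (j:ℚ)) with hEdef
    have hW : W = (-1:ℚ)^(k-1) * ((k-1).factorial * (N-k).factorial : ℚ) := by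
      rw [hWdef, hS, prod_erase_eq N k (by simp [mem_Icc]; omega)]
      push_cast; ring
    have hWne : W ≠ 0 := by
      rw [hW]; positivity
    have hE2 : (s + t + (k:ℚ)) * E = D :=
      Finset.mul_prod_erase S (fun j => s + t + (j:ℚ)) hk
    have hEne : E ≠ 0 := fun h0 => hDne (by rw [← hE2, h0, mul_zero])
    have hF : (((3*n+1).factorial : ℕ) : ℚ)
        = ((3*n+1).choose (k-1) : ℚ) * ((k-1).factorial * (N-k).factorial : ℚ) := by
      have h3 : (3*n+1).choose (k-1) * (k-1).factorial * ((3*n+1) - (k-1)).factorial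
          = (3*n+1).factorial := Nat.choose_mul_factorial_mul_factorial (by omega)
      have h4 : (3*n+1) - (k-1) = N - k := by omega
      rw [h4] at h3
      exact_mod_cast (by rw [← h3]; push_cast; ring)
    have hsq : ((-1:ℚ)^(k-1)) * ((-1:ℚ)^(k-1)) = 1 := by
      rw [← pow_add]; exact Even.neg_one_pow ⟨k-1, by ring⟩
    rw [hbasis, hfv k, ← hE2]
    field_simp
    rw [hF, hW]
    linear_combination (-(((3*n+1).choose (k-1) : ℚ) * ((k-1).factorial * (N-k).factorial : ℚ) *
      (∏ i ∈ range n, (-t - (k:ℚ) + 1 + (i:ℚ)))^3)) * hsq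
  rw [← main, hfs, hDr]
  rw [div_pow]
  ring
end

section
/- Let n be a positive integer, let d_n denote the least common multiple of 1, 2, ..., n, and let m be any integer. Define the polynomial R(t) = (t+m)(t+m+1)...(t+m+n-1) / n!. Then for every integer j, the number d_n * R'(j) is an integer, where R' is the derivative of R. -/
open Polynomial

private lemma asc_int (a : ℤ) (k : ℕ) :
    ∃ z : ℤ, ∏ i ∈ Finset.range k, ((a : ℚ) + (i : ℚ)) = (z : ℚ) * (k.factorial : ℚ) := by
  refine ⟨Ring.multichoose a k, ?_⟩
  have h2 : ∏ i ∈ Finset.range k, ((a : ℚ) + (i : ℚ))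
      = (((ascPochhammer ℤ k).eval a : ℤ) : ℚ) := by
    induction k with
    | zero => simp
    | succ k ih =>
      rw [Finset.prod_range_succ, ih, ascPochhammer_succ_right, eval_mul, eval_add, eval_X,
        eval_natCast]
      push_cast
      ring
  have h1 : (ascPochhammer ℤ k).eval a = (k.factorial : ℤ) * Ring.multichoose a k := by
    rw [eval_eq_smeval, ascPochhammer_smeval_cast ℤ,
      ← Ring.factorial_nsmul_multichoose_eq_ascPochhammer, nsmul_eq_mul]
  rw [h2, h1]
  push_cast
  ring

private lemma beta_int (n : ℕ) (d : ℤ) (hd : ∀ i : ℕ, 1 ≤ i → i ≤ n → (i : ℤ) ∣ d) :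
    ∀ b a : ℕ, a + b + 1 ≤ n →
      ∃ z : ℤ, (d : ℚ) * (a.factorial : ℚ) * (b.factorial : ℚ)
        = (z : ℚ) * ((a + b + 1).factorial : ℚ) := by
  intro b
  induction b with
  | zero =>
    intro a ha
    obtain ⟨c, hc⟩ := hd (a + 1) (by omega) (by omega)
    refine ⟨c, ?_⟩
    have h : (a + 0 + 1).factorial = (a + 1) * a.factorial := Nat.factorial_succ a
    rw [h, hc, Nat.factorial_zero]
    push_cast
    ring
  | succ b ih =>
    intro a ha
    obtain ⟨z1, hz1⟩ := ih a (by omega)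
    obtain ⟨z2, hz2⟩ := ih (a + 1) (by omega)
    refine ⟨z1 - z2, ?_⟩
    have e1 : (a + (b + 1) + 1).factorial = (a + b + 2) * (a + b + 1).factorial := by
      have h : a + (b + 1) + 1 = (a + b + 1) + 1 := by omega
      rw [h, Nat.factorial_succ]
    have e2 : ((a + 1) + b + 1).factorial = (a + b + 2) * (a + b + 1).factorial := by
      have h : (a + 1) + b + 1 = (a + b + 1) + 1 := by omega
      rw [h, Nat.factorial_succ]
    have e3 : (b + 1).factorial = (b + 1) * b.factorial := Nat.factorial_succ b
    have e4 : (a + 1).factorial = (a + 1) * a.factorial := Nat.factorial_succ a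
    rw [e2, e4] at hz2
    rw [e1, e3]
    push_cast at hz1 hz2 ⊢
    linear_combination ((a : ℚ) + b + 2) * hz1 - hz2

private lemma derivative_finset_prod {ι : Type*} [DecidableEq ι] (s : Finset ι)
    (f : ι → Polynomial ℚ) :
    Polynomial.derivative (∏ i ∈ s, f i)
      = ∑ k ∈ s, (∏ i ∈ s.erase k, f i) * Polynomial.derivative (f k) := by
  induction s using Finset.induction with
  | empty => simp
  | @insert x s hx ih =>
    rw [Finset.prod_insert hx, derivative_mul, Finset.sum_insert hx, Finset.erase_insert hx, ih,
      Finset.mul_sum]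
    congr 1
    · rw [mul_comm]
    · refine Finset.sum_congr rfl fun k hk => ?_
      have hxk : k ≠ x := fun h => hx (h ▸ hk)
      rw [Finset.erase_insert_of_ne hxk.symm,
        Finset.prod_insert (fun h => hx (Finset.mem_of_mem_erase h)), mul_assoc]

private lemma sum_int (s : Finset ℕ) (g : ℕ → ℚ) (h : ∀ k ∈ s, ∃ z : ℤ, g k = (z : ℚ)) :
    ∃ z : ℤ, ∑ k ∈ s, g k = (z : ℚ) := by
  classical
  induction s using Finset.induction with
  | empty => exact ⟨0, by simp⟩
  | insert _ _ hx ih =>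
    obtain ⟨z1, hz1⟩ := h _ (Finset.mem_insert_self _ _)
    obtain ⟨z2, hz2⟩ := ih (fun k hk => h k (Finset.mem_insert_of_mem hk))
    exact ⟨z1 + z2, by rw [Finset.sum_insert hx, hz1, hz2]; push_cast; ring⟩

theorem stmt_3 (n : ℕ) (hn : 0 < n) (m : ℤ)
    (R : Polynomial ℚ)
    (hR : R = (∏ i ∈ Finset.range n, (X + C ((m : ℚ) + (i : ℚ)))) * C ((n.factorial : ℚ))⁻¹)
    (j : ℤ) :
    ∃ z : ℤ, (((Finset.Icc 1 n).lcm id : ℕ) : ℚ) * (Polynomial.derivative R).eval (j : ℚ) = (z : ℚ) := by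
  classical
  subst hR
  set d : ℕ := (Finset.Icc 1 n).lcm id with hdd
  have hdvd : ∀ i : ℕ, 1 ≤ i → i ≤ n → (i : ℤ) ∣ (d : ℤ) := by
    intro i h1 h2
    exact_mod_cast Int.natCast_dvd_natCast.mpr
      (Finset.dvd_lcm (f := id) (by simp [Finset.mem_Icc]; omega))
  have hne : ((n.factorial : ℚ)) ≠ 0 := by
    exact_mod_cast Nat.factorial_ne_zero n
  have hev : (Polynomial.derivative
        ((∏ i ∈ Finset.range n, (X + C ((m : ℚ) + (i : ℚ)))) * C ((n.factorial : ℚ))⁻¹)).eval (j : ℚ)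
      = ∑ k ∈ Finset.range n,
          (∏ i ∈ (Finset.range n).erase k, ((j : ℚ) + ((m : ℚ) + (i : ℚ)))) * ((n.factorial : ℚ))⁻¹ := by
    rw [derivative_mul, derivative_C, mul_zero, add_zero, derivative_finset_prod]
    simp [eval_finset_sum, eval_prod, Finset.sum_mul]
  rw [hev, Finset.mul_sum]
  apply sum_int
  intro k hk
  have hkn : k < n := Finset.mem_range.mp hk
  have hsplit : (Finset.range n).erase k = Finset.range k ∪ Finset.Ico (k + 1) n := by
    ext x
    simp only [Finset.mem_erase, Finset.mem_range, Finset.mem_Ico, Finset.mem_union]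
    omega
  have hdisj : Disjoint (Finset.range k) (Finset.Ico (k + 1) n) := by
    rw [Finset.disjoint_left]
    intro x hx hx'
    simp only [Finset.mem_range] at hx
    simp only [Finset.mem_Ico] at hx'
    omega
  rw [hsplit, Finset.prod_union hdisj, Finset.prod_Ico_eq_prod_range]
  have hP1 : ∏ i ∈ Finset.range k, ((j : ℚ) + ((m : ℚ) + (i : ℚ)))
      = ∏ i ∈ Finset.range k, (((j + m : ℤ) : ℚ) + (i : ℚ)) := by
    refine Finset.prod_congr rfl (fun i _ => ?_)
    push_cast; ring
  have hP2 : ∏ i ∈ Finset.range (n - (k + 1)), ((j : ℚ) + ((m : ℚ) + ((k + 1 + i : ℕ) : ℚ)))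
      = ∏ i ∈ Finset.range (n - (k + 1)), (((j + m + k + 1 : ℤ) : ℚ) + (i : ℚ)) := by
    refine Finset.prod_congr rfl (fun i _ => ?_)
    push_cast; ring
  rw [hP1, hP2]
  obtain ⟨z1, hz1⟩ := asc_int (j + m) k
  obtain ⟨z2, hz2⟩ := asc_int (j + m + k + 1) (n - (k + 1))
  obtain ⟨w, hw⟩ := beta_int n (d : ℤ) hdvd (n - (k + 1)) k (by omega)
  have hkb : k + (n - (k + 1)) + 1 = n := by omega
  rw [hkb] at hw
  refine ⟨z1 * z2 * w, ?_⟩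
  rw [hz1, hz2]
  push_cast at hw ⊢
  field_simp
  linear_combination (z1 : ℚ) * (z2 : ℚ) * hw
end

section
/- Let n be a positive integer and let p be a prime with p^2 > 3n and 2/3 <= frac(n/p) < 1, where frac denotes the fractional part. Then for all nonnegative integers a and b with a >= n, b >= n and a + b + 1 <= 3n + 1, the prime p divides the product binomial(3n+1, a+b+1) * binomial(a, n) * binomial(b, n). -/
open Nat Finset

/-- If there is a carry in the lowest digit when adding `k` and `m - k` in base `p`,
then `p` divides `m.choose k` (Kummer). -/
lemma kummer_carry {p m k : ℕ} (hp : p.Prime) (hkm : k ≤ m)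
    (h : p ≤ k % p + (m - k) % p) : p ∣ m.choose k := by
  have hpm : p ≤ m := le_trans h (by
    have := Nat.mod_le k p
    have := Nat.mod_le (m - k) p
    omega)
  have hlog : 1 ≤ Nat.log p m := by
    exact Nat.le_log_of_pow_le hp.one_lt (by simpa using hpm)
  have hmem : 1 ∈ {i ∈ Ico 1 (Nat.log p m + 1) | p ^ i ≤ k % p ^ i + (m - k) % p ^ i} := by
    simp only [mem_filter, mem_Ico]
    exact ⟨⟨le_refl 1, by omega⟩, by simpa using h⟩
  have hcard : 1 ≤ #{i ∈ Ico 1 (Nat.log p m + 1) | p ^ i ≤ k % p ^ i + (m - k) % p ^ i} :=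
    Finset.card_pos.mpr ⟨1, hmem⟩
  have hmul := Nat.Prime.emultiplicity_choose hp hkm (Nat.lt_succ_self _)
  have : (1 : ℕ∞) ≤ emultiplicity p (m.choose k) := by
    rw [hmul]; exact_mod_cast hcard
  have := pow_dvd_of_le_emultiplicity (k := 1) (by simpa using this)
  simpa using this

theorem stmt_5 (n : ℕ) (hn : 0 < n) (p : ℕ) (hp : p.Prime)
    (hp2 : 3 * n < p ^ 2)
    (hfrac1 : (2 : ℚ) / 3 ≤ Int.fract ((n : ℚ) / (p : ℚ)))
    (hfrac2 : Int.fract ((n : ℚ) / (p : ℚ)) < 1) :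
    ∀ a b : ℕ, n ≤ a → n ≤ b → a + b + 1 ≤ 3 * n + 1 →
      p ∣ (3 * n + 1).choose (a + b + 1) * a.choose n * b.choose n := by
  have hppos : 0 < p := hp.pos
  set r := n % p with hr
  -- translate the fractional-part hypothesis
  have hfr : Int.fract ((n : ℚ) / (p : ℚ)) = (r : ℚ) / p :=
    Int.fract_div_natCast_eq_div_natCast_mod
  have h2p3r : 2 * p ≤ 3 * r := by
    rw [hfr] at hfrac1
    have hpq : (0 : ℚ) < p := by exact_mod_cast hppos
    rw [div_le_div_iff₀ (by norm_num) hpq] at hfrac1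
    have : (2:ℚ) * p ≤ 3 * r := by linarith
    exact_mod_cast this
  have hrp : r < p := Nat.mod_lt _ hppos
  intro a b ha hb hab
  -- carry in n + (a - n)? then p ∣ a.choose n
  by_cases h1 : p ≤ n % p + (a - n) % p
  · exact Dvd.dvd.mul_right (Dvd.dvd.mul_left (kummer_carry hp ha h1) _) _
  by_cases h2 : p ≤ n % p + (b - n) % p
  · exact Dvd.dvd.mul_left (kummer_carry hp hb h2) _
  -- otherwise there is a carry in the top binomial
  push_neg at h1 h2
  refine Dvd.dvd.mul_right (Dvd.dvd.mul_right (kummer_carry hp hab ?_) _) _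
  set x := a - n with hx
  set y := b - n with hy
  set s := x + y with hs
  have hsn : s ≤ n := by omega
  set u := x % p + y % p with hu
  have hxr : x % p + r < p := by omega
  have hyr : y % p + r < p := by omega
  have hup : u < p := by omega
  have hsu : s % p = u := by
    rw [hs, Nat.add_mod, hu]
    exact Nat.mod_eq_of_lt hup
  -- d = 3n+1 - (a+b+1) = n - s
  have hd : 3 * n + 1 - (a + b + 1) = n - s := by omega
  have hur : u ≤ r := by omega
  -- compute (n - s) % p = r - u
  have hdiv : s / p ≤ n / p := Nat.div_le_div_right hsn
  have hdm : (n - s) % p = r - u := by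
    have en := Nat.div_add_mod n p
    have es := Nat.div_add_mod s p
    have hPle : p * (s / p) ≤ p * (n / p) := Nat.mul_le_mul_left p hdiv
    have e : n - s = (p * (n / p) - p * (s / p)) + (r - u) := by omega
    obtain ⟨c, hc⟩ : p ∣ p * (n / p) - p * (s / p) :=
      Nat.dvd_sub (dvd_mul_right _ _) (dvd_mul_right _ _)
    rw [e, hc, Nat.mul_add_mod, Nat.mod_eq_of_lt (by omega)]
  -- compute (3n+1) % p = 3r + 1 - 2p
  have h3n : (3 * n + 1) % p = 3 * r + 1 - 2 * p := by
    have en := Nat.div_add_mod n p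
    have e : 3 * n + 1 = p * (3 * (n / p) + 2) + (3 * r + 1 - 2 * p) := by
      ring_nf; omega
    rw [e, Nat.mul_add_mod, Nat.mod_eq_of_lt (by omega)]
  -- now the carry
  by_contra hlt
  push_neg at hlt
  set k := a + b + 1 with hk
  have hsum : (k % p + (3 * n + 1 - k) % p) % p = (3 * n + 1) % p := by
    rw [← Nat.add_mod, Nat.add_sub_cancel' hab]
  rw [Nat.mod_eq_of_lt hlt, h3n, hd, hdm] at hsum
  have hkm := Nat.mod_lt k hppos
  omega
end

section
/- For every positive integer n, as an identity of rational functions in t: the sum over k from 1 to 3n+2 of A_k(t) * (sum over l from 1 to k-1 of 1/(t+l)^2) equals the sum over k from 1 to 3n+2 of A_k(t) * (sum over l from 1 to k-1 of 1/(t+l-n)^2), where A_k(t) = (-1)^(k-1) * binomial(3n+1, k-1) * ((-t-k+1)_n / n!)^3. -/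
open Finset Polynomial
open scoped fwdDiff

private lemma degree_comp_sub_lt (p : ℚ[X]) {m : ℕ} (hp : p.degree < ((m+1 : ℕ) : WithBot ℕ)) :
    (p.comp (X + C 1) - p).degree < (m : WithBot ℕ) := by
  rcases eq_or_ne p 0 with rfl | h0
  · simp only [zero_comp, sub_zero, degree_zero]
    exact WithBot.bot_lt_coe m
  rcases Nat.eq_zero_or_pos p.natDegree with hd | hd
  · obtain ⟨a, rfl⟩ := Polynomial.natDegree_eq_zero.mp hd
    simp only [C_comp, sub_self, degree_zero]
    exact WithBot.bot_lt_coe m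
  · have hq : (X + C (1:ℚ)).natDegree ≠ 0 := by rw [natDegree_X_add_C]; exact one_ne_zero
    have hmon : (X + C (1:ℚ)).Monic := monic_X_add_C 1
    have hlc : (p.comp (X + C 1)).leadingCoeff = p.leadingCoeff := by
      rw [leadingCoeff_comp hq, hmon.leadingCoeff, one_pow, mul_one]
    have hc0 : p.comp (X + C 1) ≠ 0 := by
      intro h
      apply h0
      rw [h, leadingCoeff_zero] at hlc
      exact leadingCoeff_eq_zero.mp hlc.symm
    have hndc : (p.comp (X + C 1)).natDegree = p.natDegree := by
      rw [natDegree_comp, natDegree_X_add_C, mul_one]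
    have hdeg : (p.comp (X + C 1)).degree = p.degree := by
      rw [degree_eq_natDegree hc0, degree_eq_natDegree h0, hndc]
    have h1 := degree_sub_lt hdeg hc0 hlc
    rw [hdeg] at h1
    have h2 : p.degree ≤ (m : WithBot ℕ) := by
      rw [degree_eq_natDegree h0] at hp ⊢
      exact_mod_cast Nat.lt_succ_iff.mp (by exact_mod_cast hp)
    exact lt_of_lt_of_le h1 h2

private lemma fwdDiff_iter_eval_zero :
    ∀ (m : ℕ) (p : ℚ[X]), p.degree < (m : WithBot ℕ) →
      ∀ x : ℚ, (fwdDiff (1:ℚ))^[m] (fun y => p.eval y) x = 0 := by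
  intro m
  induction m with
  | zero =>
    intro p hp x
    have : p = 0 := by
      by_contra h
      exact absurd (Polynomial.zero_le_degree_iff.mpr h) (not_le.mpr (by simpa using hp))
    simp [this]
  | succ m ih =>
    intro p hp x
    rw [Function.iterate_succ_apply]
    have hdf : fwdDiff (1:ℚ) (fun y => p.eval y) = fun y => (p.comp (X + C 1) - p).eval y := by
      funext y
      simp [fwdDiff, eval_comp]
    rw [hdf]
    exact ih _ (degree_comp_sub_lt p hp) x

private lemma alt_sum_poly (m : ℕ) (p : ℚ[X]) (hp : p.degree < (m : WithBot ℕ)) (c : ℚ) :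
    ∑ j ∈ range (m+1), (-1:ℚ)^j * (m.choose j) * p.eval (c + j) = 0 := by
  have h := fwdDiff_iter_eq_sum_shift (1:ℚ) (fun y => p.eval y) m c
  rw [fwdDiff_iter_eval_zero m p hp c] at h
  have h2 : (0:ℚ) = ∑ k ∈ range (m + 1), (-1:ℚ)^(m-k) * (m.choose k) * p.eval (c + k) := by
    rw [h]
    apply Finset.sum_congr rfl
    intro k _
    push_cast [zsmul_eq_mul, smul_eq_mul]
    ring_nf
  calc ∑ j ∈ range (m+1), (-1:ℚ)^j * (m.choose j) * p.eval (c + j)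
      = ∑ j ∈ range (m+1), (-1:ℚ)^m * ((-1:ℚ)^(m-j) * (m.choose j) * p.eval (c + j)) := by
        apply Finset.sum_congr rfl
        intro j hj
        have hjm : j ≤ m := Nat.lt_succ_iff.mp (Finset.mem_range.mp hj)
        have key : (-1:ℚ)^m * (-1:ℚ)^(m-j) = (-1:ℚ)^j := by
          rw [← pow_add]
          have h4 : m + (m - j) = 2*(m-j) + j := by omega
          rw [h4, pow_add, pow_mul]
          norm_num
        rw [← key]; ring
    _ = (-1:ℚ)^m * ∑ j ∈ range (m+1), (-1:ℚ)^(m-j) * (m.choose j) * p.eval (c + j) := by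
        rw [Finset.mul_sum]
    _ = 0 := by rw [← h2, mul_zero]

theorem stmt_16 (n : ℕ) (hn : 0 < n) (t : ℚ)
    (ht : ∀ l : ℤ, 1 - (n : ℤ) ≤ l → l ≤ 3 * n + 1 → t + (l : ℚ) ≠ 0) :
    ∑ k ∈ Finset.Icc 1 (3 * n + 2),
        ((-1 : ℚ) ^ (k - 1) * ((3 * n + 1).choose (k - 1) : ℚ) *
            ((∏ i ∈ Finset.range n, (-t - (k : ℚ) + 1 + (i : ℚ))) / (n.factorial : ℚ)) ^ 3) *
          (∑ l ∈ Finset.Icc 1 (k - 1), 1 / (t + (l : ℚ)) ^ 2)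
      = ∑ k ∈ Finset.Icc 1 (3 * n + 2),
          ((-1 : ℚ) ^ (k - 1) * ((3 * n + 1).choose (k - 1) : ℚ) *
              ((∏ i ∈ Finset.range n, (-t - (k : ℚ) + 1 + (i : ℚ))) / (n.factorial : ℚ)) ^ 3) *
            (∑ l ∈ Finset.Icc 1 (k - 1), 1 / (t + (l : ℚ) - (n : ℚ)) ^ 2) := by
  -- nonvanishing of denominators
  have hu : ∀ k i : ℕ, 1 ≤ k → k ≤ 3*n+2 → i < n → (k:ℚ) + (t + i - n) ≠ 0 := by
    intro k i hk1 hk2 hin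
    have h2 := ht ((k:ℤ) + i - n) (by omega) (by omega)
    push_cast at h2
    intro hc; apply h2; linarith
  have hf : (n.factorial : ℚ) ≠ 0 := Nat.cast_ne_zero.mpr n.factorial_ne_zero
  set G : ℕ → ℚ := fun m => 1/(t + m - n)^2 with hGdef
  set Pb : ℚ[X] := ∏ i ∈ range n, (X + C (t + i - n)) with hPbdef
  set Qp : ℚ[X] := ∑ i ∈ range n,
      (X + C (t + i - n)) * ∏ j ∈ (range n).erase i, (X + C (t + j - n))^3 with hQpdef
  set Cc : ℚ := ∑ i ∈ range n, G (1+i) with hCcdef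
  set R : ℚ[X] := C ((-1:ℚ)^n / (n.factorial:ℚ)^3) * (Qp - C Cc * Pb^3) with hRdef
  have hPbev : ∀ x : ℚ, Pb.eval x = ∏ i ∈ range n, (x + (t + i - n)) := by
    intro x; simp [hPbdef, eval_prod]
  have hQpev : ∀ x : ℚ, Qp.eval x
      = ∑ i ∈ range n, (x + (t + i - n)) * ∏ j ∈ (range n).erase i, (x + (t + j - n))^3 := by
    intro x; simp [hQpdef, eval_finset_sum, eval_prod]
  -- degree bound
  have hdeg : R.degree < ((3*n+1 : ℕ) : WithBot ℕ) := by
    have h1 : Pb.natDegree ≤ n := by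
      refine le_trans (natDegree_prod_le _ _) ?_
      have he : ∀ i ∈ range n, (X + C (t + (i:ℚ) - n)).natDegree = 1 :=
        fun i _ => natDegree_X_add_C _
      rw [Finset.sum_congr rfl he]
      simp
    have h2 : (Pb^3).natDegree ≤ 3*n := by
      refine le_trans natDegree_pow_le ?_
      omega
    have h3 : Qp.natDegree ≤ 3*n := by
      refine natDegree_sum_le_of_forall_le _ _ ?_
      intro i hi
      refine le_trans natDegree_mul_le ?_
      have hx : (X + C (t + i - n)).natDegree ≤ 1 := le_of_eq (natDegree_X_add_C _)
      have hp : (∏ j ∈ (range n).erase i, (X + C (t + j - n))^3).natDegree ≤ 3*(n-1) := by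
        refine le_trans (natDegree_prod_le _ _) ?_
        have he : ∀ j ∈ (range n).erase i, ((X + C (t + (j:ℚ) - n))^3).natDegree ≤ 3 := by
          intro j _
          refine le_trans natDegree_pow_le ?_
          rw [natDegree_X_add_C]
        calc ∑ j ∈ (range n).erase i, ((X + C (t + (j:ℚ) - n))^3).natDegree
            ≤ ∑ _j ∈ (range n).erase i, 3 :=
              Finset.sum_le_sum (f := fun j : ℕ => ((X + C (t + (j:ℚ) - n))^3).natDegree)
                (g := fun _ => 3) he
          _ = 3*(n-1) := by
              rw [Finset.sum_const, Finset.card_erase_of_mem hi, Finset.card_range]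
              ring
      omega
    have h4 : R.natDegree ≤ 3*n := by
      refine le_trans natDegree_mul_le ?_
      have h5 : (Qp - C Cc * Pb^3).natDegree ≤ 3*n := by
        refine le_trans (natDegree_sub_le _ _) ?_
        have h6 : (C Cc * Pb^3).natDegree ≤ 3*n :=
          le_trans natDegree_mul_le (by simpa using h2)
        omega
      simpa using h5
    calc R.degree ≤ (R.natDegree : WithBot ℕ) := degree_le_natDegree
      _ ≤ ((3*n : ℕ) : WithBot ℕ) := by exact_mod_cast h4
      _ < ((3*n+1 : ℕ) : WithBot ℕ) := by exact_mod_cast Nat.lt_succ_self _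
  -- reduce to a single sum
  rw [← sub_eq_zero, ← Finset.sum_sub_distrib]
  have hterm : ∀ k ∈ Icc 1 (3*n+2),
      ((-1 : ℚ) ^ (k - 1) * ((3 * n + 1).choose (k - 1) : ℚ) *
          ((∏ i ∈ Finset.range n, (-t - (k : ℚ) + 1 + (i : ℚ))) / (n.factorial : ℚ)) ^ 3) *
        (∑ l ∈ Finset.Icc 1 (k - 1), 1 / (t + (l : ℚ)) ^ 2)
      - ((-1 : ℚ) ^ (k - 1) * ((3 * n + 1).choose (k - 1) : ℚ) *
          ((∏ i ∈ Finset.range n, (-t - (k : ℚ) + 1 + (i : ℚ))) / (n.factorial : ℚ)) ^ 3) *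
        ((Icc 1 (k-1)).sum G)
      = (-1 : ℚ) ^ (k - 1) * ((3 * n + 1).choose (k - 1) : ℚ) * R.eval (k:ℚ) := by
    intro k hk
    obtain ⟨hk1, hk2⟩ := Finset.mem_Icc.mp hk
    have hIcc : Icc 1 (k-1) = Ico 1 k := by
      rw [← Finset.Ico_add_one_right_eq_Icc]
      congr 1
      omega
    -- step (1): difference of inner sums
    have e1 : ∑ l ∈ Icc 1 (k-1), 1 / (t + (l : ℚ)) ^ 2 = ∑ l ∈ Ico 1 k, G (l+n) := by
      rw [hIcc]
      refine Finset.sum_congr rfl (fun l _ => ?_)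
      have : t + ((l+n : ℕ) : ℚ) - n = t + l := by push_cast; ring
      simp only [hGdef, this]
    have e2 : (Icc 1 (k-1)).sum G = ∑ l ∈ Ico 1 k, G l := by rw [hIcc]
    have e3 : ∑ l ∈ Ico 1 k, G (l+n) = ∑ l ∈ Ico (1+n) (k+n), G l :=
      Finset.sum_Ico_add' G 1 k n
    have c1 : (∑ l ∈ Ico 1 k, G l) + ∑ l ∈ Ico k (k+n), G l = ∑ l ∈ Ico 1 (k+n), G l :=
      Finset.sum_Ico_consecutive G hk1 (by omega)
    have c2 : (∑ l ∈ Ico 1 (1+n), G l) + ∑ l ∈ Ico (1+n) (k+n), G l = ∑ l ∈ Ico 1 (k+n), G l :=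
      Finset.sum_Ico_consecutive G (by omega) (by omega)
    have e4 : ∑ l ∈ Ico k (k+n), G l = ∑ i ∈ range n, G (k+i) := by
      rw [Finset.sum_Ico_eq_sum_range]
      simp
    have e5 : ∑ l ∈ Ico 1 (1+n), G l = Cc := by
      rw [hCcdef, Finset.sum_Ico_eq_sum_range]
      simp
    have hS : (∑ l ∈ Icc 1 (k-1), 1 / (t + (l : ℚ)) ^ 2) - (Icc 1 (k-1)).sum G
        = (∑ i ∈ range n, G (k+i)) - Cc := by
      rw [e1, e2, e3]
      linarith
    -- step (2): product formula
    have hg : ∏ i ∈ Finset.range n, (-t - (k : ℚ) + 1 + (i : ℚ))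
        = (-1:ℚ)^n * Pb.eval (k:ℚ) := by
      have r1 : ∏ i ∈ Finset.range n, (-t - (k : ℚ) + 1 + (i : ℚ))
          = ∏ i ∈ range n, ((-1:ℚ) * ((k:ℚ) + t - 1 - i)) := by
        refine Finset.prod_congr rfl (fun i _ => by ring)
      have r2 : ∏ i ∈ range n, ((-1:ℚ) * ((k:ℚ) + t - 1 - i))
          = (-1:ℚ)^n * ∏ i ∈ range n, ((k:ℚ) + t - 1 - i) := by
        rw [Finset.prod_mul_distrib, Finset.prod_const, Finset.card_range]
      have r3 : ∏ i ∈ range n, ((k:ℚ) + t - 1 - i)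
          = ∏ i ∈ range n, ((k:ℚ) + (t + i - n)) := by
        have := Finset.prod_range_reflect (fun j => (k:ℚ) + (t + j - n)) n
        rw [← this]
        refine Finset.prod_congr rfl (fun j hj => ?_)
        have hjn : j < n := Finset.mem_range.mp hj
        have : ((n - 1 - j : ℕ) : ℚ) = (n:ℚ) - 1 - j := by
          have h1 : (1:ℕ) + j ≤ n := by omega
          push_cast [Nat.cast_sub (by omega : j ≤ n - 1), Nat.cast_sub (by omega : 1 ≤ n)]
          ring
        rw [this]
        ring
      rw [r1, r2, r3, hPbev]
    -- step (3): main pointwise polynomial identity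
    have hQ : (Pb.eval (k:ℚ))^3 * (∑ i ∈ range n, G (k+i)) = Qp.eval (k:ℚ) := by
      rw [hPbev, hQpev, Finset.mul_sum]
      refine Finset.sum_congr rfl (fun i hi => ?_)
      have hin : i < n := Finset.mem_range.mp hi
      have hui : (k:ℚ) + (t + i - n) ≠ 0 := hu k i hk1 hk2 hin
      have hGi : G (k+i) = 1 / ((k:ℚ) + (t + i - n))^2 := by
        have : t + ((k+i : ℕ) : ℚ) - n = (k:ℚ) + (t + i - n) := by push_cast; ring
        simp only [hGdef, this]
      rw [hGi, ← Finset.mul_prod_erase (range n) (fun j => (k:ℚ) + (t + j - n)) hi]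
      rw [Finset.prod_pow]
      field_simp
    -- put it all together
    rw [← mul_sub, hS, hg]
    have hsign : ((-1:ℚ)^n)^3 = (-1:ℚ)^n := by
      rw [← pow_mul]
      have h3 : n*3 = n + 2*n := by ring
      rw [h3, pow_add, pow_mul]
      norm_num
    have hev : R.eval (k:ℚ) = ((-1:ℚ)^n / (n.factorial:ℚ)^3) *
        (Qp.eval (k:ℚ) - Cc * (Pb.eval (k:ℚ))^3) := by
      rw [hRdef]
      simp [eval_mul, eval_sub, eval_pow]
    rw [hev, ← hQ]
    rw [div_pow, mul_pow, hsign]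
    field_simp
  rw [Finset.sum_congr rfl hterm]
  -- reindex and apply the finite-difference lemma
  have hIcc2 : Icc 1 (3*n+2) = Ico 1 (3*n+3) := by rw [← Finset.Ico_add_one_right_eq_Icc]; rfl
  rw [hIcc2, Finset.sum_Ico_eq_sum_range]
  have hrange : 3*n+3-1 = (3*n+1)+1 := by omega
  rw [hrange]
  have := alt_sum_poly (3*n+1) R hdeg 1
  rw [← this]
  refine Finset.sum_congr rfl (fun j hj => ?_)
  have h1 : 1 + j - 1 = j := by omega
  have h2 : ((1 + j : ℕ) : ℚ) = (1:ℚ) + j := by push_cast; ring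
  rw [h1, h2]
end
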